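/- Let $A \in \mathbb{R}^{d\times d}$ be a Hurwitz matrix (every eigenvalue of $A$ has strictly negative real part). Then there exist constants $\alpha_0 > 0$, $C < \infty$ and $\varepsilon > 0$ such that for all $\alpha \in (0, \alpha_0]$ and all integers $n \ge 0$, $\|(I + \alpha A)^n - e^{n\alpha A}\|_F \le \alpha^2 n\, C\, e^{-\varepsilon \alpha n} \le (C/\varepsilon)\,\alpha$. -/

import Mathlib

open scoped BigOperators

/-- The Frobenius norm of a square real matrix. -/
noncomputable def frobNorm {d : ℕ} (M : Matrix (Fin d) (Fin d) ℝ) : ℝ :=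
  Real.sqrt (∑ i, ∑ j, (M i j) ^ 2)

/-- A real square matrix is Hurwitz if every (complex) eigenvalue has strictly
negative real part. -/
def IsHurwitz {d : ℕ} (A : Matrix (Fin d) (Fin d) ℝ) : Prop :=
  ∀ μ ∈ spectrum ℂ (A.map (algebraMap ℝ ℂ)), μ.re < 0

namespace EulerExpAux

open NormedSpace Filter Finset

section

attribute [local instance] Matrix.linftyOpSemiNormedRing Matrix.linftyOpNormedRing
  Matrix.linftyOpNormedAlgebra Matrix.linftyOpNormedSpace

variable {d : ℕ}

local notation "Mc" => Matrix (Fin d) (Fin d) ℂ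

lemma norm_entry_le (M : Mc) (i j : Fin d) : ‖M i j‖ ≤ ‖M‖ := by
  rw [Matrix.linfty_opNorm_def]
  have h1 : ‖M i j‖₊ ≤ ∑ j', ‖M i j'‖₊ :=
    Finset.single_le_sum (f := fun j' => ‖M i j'‖₊) (fun _ _ => zero_le) (Finset.mem_univ j)
  have h2 : (∑ j', ‖M i j'‖₊) ≤ Finset.univ.sup fun i => ∑ j', ‖M i j'‖₊ :=
    Finset.le_sup (f := fun i => ∑ j', ‖M i j'‖₊) (Finset.mem_univ i)
  exact_mod_cast h1.trans h2

lemma frobNorm_le_sum (M : Matrix (Fin d) (Fin d) ℝ) :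
    frobNorm M ≤ ∑ i, ∑ j, |M i j| := by
  have hnn : (0 : ℝ) ≤ ∑ i, ∑ j, |M i j| :=
    Finset.sum_nonneg fun i _ => Finset.sum_nonneg fun j _ => abs_nonneg _
  have h : (∑ i, ∑ j, (M i j) ^ 2) ≤ (∑ i, ∑ j, |M i j|) ^ 2 := by
    calc ∑ i, ∑ j, (M i j) ^ 2 = ∑ i, ∑ j, |M i j| ^ 2 := by simp [sq_abs]
      _ ≤ ∑ i, (∑ j, |M i j|) ^ 2 := by
          refine Finset.sum_le_sum fun i _ => ?_
          exact Finset.sum_sq_le_sq_sum_of_nonneg fun j _ => abs_nonneg _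
      _ ≤ (∑ i, ∑ j, |M i j|) ^ 2 :=
          Finset.sum_sq_le_sq_sum_of_nonneg fun i _ =>
            Finset.sum_nonneg fun j _ => abs_nonneg _
  calc frobNorm M ≤ Real.sqrt ((∑ i, ∑ j, |M i j|) ^ 2) := Real.sqrt_le_sqrt h
    _ = ∑ i, ∑ j, |M i j| := Real.sqrt_sq hnn

lemma exists_pow_le [Nonempty (Fin d)] (P : Mc) {ρ : NNReal}
    (hρ : spectralRadius ℂ P < (ρ : ENNReal)) :
    ∃ M : ℝ, 1 ≤ M ∧ ∀ k : ℕ, ‖P ^ k‖ ≤ M * (ρ : ℝ) ^ k := by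
  have hρ0 : 0 < ρ := by
    rcases eq_or_lt_of_le (zero_le : 0 ≤ ρ) with h | h
    · exfalso; rw [← h] at hρ; simp at hρ
    · exact h
  have hρ0' : (0 : ℝ) < ρ := hρ0
  have htend := spectrum.pow_nnnorm_pow_one_div_tendsto_nhds_spectralRadius P
  have hev : ∀ᶠ n : ℕ in atTop, (‖P ^ n‖₊ : ENNReal) ^ (1 / (n : ℝ)) < (ρ : ENNReal) :=
    htend.eventually_lt_const hρ
  obtain ⟨N, hN⟩ := eventually_atTop.mp hev
  have hbig : ∀ n : ℕ, N + 1 ≤ n → ‖P ^ n‖ ≤ (ρ : ℝ) ^ n := by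
    intro n hn
    have hn0 : (n : ℝ) ≠ 0 := Nat.cast_ne_zero.mpr (Nat.lt_of_lt_of_le (Nat.succ_pos N) hn).ne'
    have h1 := hN n (le_trans (Nat.le_succ N) hn)
    have h2 := ENNReal.rpow_le_rpow h1.le (Nat.cast_nonneg (α := ℝ) n)
    rw [← ENNReal.rpow_mul, one_div, inv_mul_cancel₀ hn0, ENNReal.rpow_one,
      ENNReal.rpow_natCast, ← ENNReal.coe_pow, ENNReal.coe_le_coe] at h2
    calc ‖P ^ n‖ = ((‖P ^ n‖₊ : ℝ)) := rfl
      _ ≤ ((ρ ^ n : NNReal) : ℝ) := by exact_mod_cast h2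
      _ = (ρ : ℝ) ^ n := by push_cast; ring
  set M : ℝ := 1 + ∑ k ∈ Finset.range (N + 1), ‖P ^ k‖ / (ρ : ℝ) ^ k with hM
  have hMsum : ∀ k ∈ Finset.range (N + 1), 0 ≤ ‖P ^ k‖ / (ρ : ℝ) ^ k := fun k _ => by positivity
  have hM1 : 1 ≤ M := le_add_of_nonneg_right (Finset.sum_nonneg hMsum)
  refine ⟨M, hM1, fun k => ?_⟩
  by_cases hk : k < N + 1
  · have hle : ‖P ^ k‖ / (ρ : ℝ) ^ k ≤ M := by
      have := Finset.single_le_sum hMsum (Finset.mem_range.mpr hk)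
      linarith
    have := mul_le_mul_of_nonneg_right hle (le_of_lt (pow_pos hρ0' k))
    rwa [div_mul_cancel₀] at this
    positivity
  · push_neg at hk
    calc ‖P ^ k‖ ≤ (ρ : ℝ) ^ k := hbig k hk
      _ ≤ M * (ρ : ℝ) ^ k := le_mul_of_one_le_left (by positivity) hM1

lemma norm_exp_remainder (x : Mc) (hx : ‖x‖ ≤ 1) :
    ‖exp x - 1 - x‖ ≤ ‖x‖ ^ 2 * Real.exp 1 := by
  have hs : HasSum (fun n : ℕ => ((n.factorial : ℝ))⁻¹ • x ^ n) (exp x) :=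
    NormedSpace.exp_series_hasSum_exp' x
  have h2 : HasSum (fun n : ℕ => (((n + 2).factorial : ℝ))⁻¹ • x ^ (n + 2))
      (exp x - ∑ i ∈ Finset.range 2, ((i.factorial : ℝ))⁻¹ • x ^ i) :=
    (hasSum_nat_add_iff' 2).mpr hs
  have hsum2 : (∑ i ∈ Finset.range 2, ((i.factorial : ℝ))⁻¹ • x ^ i) = 1 + x := by
    simp [Finset.sum_range_succ]
  rw [hsum2] at h2
  have hg : HasSum (fun n : ℕ => ‖x‖ ^ 2 * ((1 : ℝ) ^ n / n.factorial))
      (‖x‖ ^ 2 * Real.exp 1) := by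
    have h1 : HasSum (fun n : ℕ => (1 : ℝ) ^ n / n.factorial) (exp 1) :=
      NormedSpace.expSeries_div_hasSum_exp (1 : ℝ)
    rw [← Real.exp_eq_exp_ℝ] at h1
    exact h1.mul_left _
  have hb : ∀ n : ℕ, ‖(((n + 2).factorial : ℝ))⁻¹ • x ^ (n + 2)‖ ≤
      ‖x‖ ^ 2 * ((1 : ℝ) ^ n / n.factorial) := by
    intro n
    rw [norm_smul]
    have hxp : ‖x ^ (n + 2)‖ ≤ ‖x‖ ^ (n + 2) := norm_pow_le' x (Nat.succ_pos _)
    have hfac : ((n.factorial : ℝ))⁻¹ ≥ (((n + 2).factorial : ℝ))⁻¹ := by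
      apply inv_anti₀
      · exact_mod_cast n.factorial_pos
      · exact_mod_cast Nat.factorial_le (by omega)
    have hxn : ‖x‖ ^ (n + 2) ≤ ‖x‖ ^ 2 := by
      calc ‖x‖ ^ (n + 2) = ‖x‖ ^ 2 * ‖x‖ ^ n := by ring
        _ ≤ ‖x‖ ^ 2 * 1 := by
            exact mul_le_mul_of_nonneg_left (pow_le_one₀ (norm_nonneg x) hx) (by positivity)
        _ = ‖x‖ ^ 2 := mul_one _
    calc ‖(((n + 2).factorial : ℝ))⁻¹‖ * ‖x ^ (n + 2)‖
        ≤ ((n.factorial : ℝ))⁻¹ * ‖x‖ ^ 2 := by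
          apply mul_le_mul _ (hxp.trans hxn) (norm_nonneg _) (by positivity)
          rw [Real.norm_eq_abs, abs_of_nonneg (by positivity)]
          exact hfac
      _ = ‖x‖ ^ 2 * ((1 : ℝ) ^ n / n.factorial) := by rw [one_pow]; ring
  have hfinal := tsum_of_norm_bounded hg hb
  rw [sub_sub]; exact (congrArg norm h2.tsum_eq).symm.le.trans hfinal

lemma norm_exp_smul_le (P : Mc) {M ρ : ℝ} (hM : 1 ≤ M)
    (h : ∀ k : ℕ, ‖P ^ k‖ ≤ M * ρ ^ k) {u : ℝ} (hu : 0 ≤ u) :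
    ‖exp (u • (P - 1))‖ ≤ M * Real.exp (u * ρ - u) := by
  have hsplit : u • (P - 1) = u • P + (-u) • (1 : Mc) := by
    rw [smul_sub, neg_smul, ← sub_eq_add_neg]
  rw [hsplit, Matrix.exp_add_of_commute _ _ (((Commute.one_right _).smul_right _).smul_left _)]
  have hone : exp ((-u) • (1 : Mc)) = Real.exp (-u) • (1 : Mc) := by
    rw [← Algebra.algebraMap_eq_smul_one]
    erw [← NormedSpace.algebraMap_exp_comm (𝕂 := ℝ) (𝔸 := Mc) (-u)]
    rw [← Real.exp_eq_exp_ℝ, Algebra.algebraMap_eq_smul_one]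
  rw [hone, mul_smul_comm, mul_one, norm_smul, Real.norm_eq_abs,
    abs_of_pos (Real.exp_pos _)]
  have hexp : ‖exp (u • P)‖ ≤ M * Real.exp (u * ρ) := by
    have hs : HasSum (fun n : ℕ => ((n.factorial : ℝ))⁻¹ • (u • P) ^ n) (exp (u • P)) :=
      NormedSpace.exp_series_hasSum_exp' _
    have hg : HasSum (fun n : ℕ => M * ((u * ρ) ^ n / n.factorial)) (M * Real.exp (u * ρ)) := by
      have h1 : HasSum (fun n : ℕ => (u * ρ) ^ n / n.factorial) (exp (u * ρ)) :=
        NormedSpace.expSeries_div_hasSum_exp (u * ρ)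
      rw [← Real.exp_eq_exp_ℝ] at h1
      exact h1.mul_left _
    have hb : ∀ n : ℕ, ‖((n.factorial : ℝ))⁻¹ • (u • P) ^ n‖ ≤ M * ((u * ρ) ^ n / n.factorial) := by
      intro n
      rw [smul_pow, norm_smul, norm_smul, Real.norm_eq_abs, Real.norm_eq_abs,
        abs_of_nonneg (by positivity : (0:ℝ) ≤ ((n.factorial : ℝ))⁻¹),
        abs_of_nonneg (pow_nonneg hu n)]
      calc ((n.factorial : ℝ))⁻¹ * (u ^ n * ‖P ^ n‖) ≤ ((n.factorial : ℝ))⁻¹ * (u ^ n * (M * ρ ^ n)) := by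
            apply mul_le_mul_of_nonneg_left _ (by positivity)
            exact mul_le_mul_of_nonneg_left (h n) (pow_nonneg hu n)
        _ = M * ((u * ρ) ^ n / n.factorial) := by rw [mul_pow]; field_simp
    have hfinal := tsum_of_norm_bounded hg hb
    exact (congrArg norm hs.tsum_eq).symm.le.trans hfinal
  calc Real.exp (-u) * ‖exp (u • P)‖ ≤ Real.exp (-u) * (M * Real.exp (u * ρ)) :=
        mul_le_mul_of_nonneg_left hexp (Real.exp_pos _).le
    _ = M * Real.exp (u * ρ - u) := by rw [Real.exp_sub, Real.exp_neg]; field_simp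

lemma norm_convex_pow [Nonempty (Fin d)] (P : Mc) {M ρ θ : ℝ} (hM : 0 ≤ M) (hρ0 : 0 ≤ ρ)
    (h : ∀ k : ℕ, ‖P ^ k‖ ≤ M * ρ ^ k) (hθ0 : 0 ≤ θ) (hθ1 : θ ≤ 1) (n : ℕ) :
    ‖((1 - θ) • (1 : Mc) + θ • P) ^ n‖ ≤ M * (1 - θ + θ * ρ) ^ n := by
  have hc : Commute ((1 - θ) • (1 : Mc)) (θ • P) :=
    ((Commute.one_left P).smul_left _).smul_right _
  rw [hc.add_pow]
  refine (norm_sum_le _ _).trans ?_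
  have hterm : ∀ k ∈ Finset.range (n + 1),
      ‖((1 - θ) • (1 : Mc)) ^ k * (θ • P) ^ (n - k) * (n.choose k : Mc)‖ ≤
        M * ((1 - θ) ^ k * (θ * ρ) ^ (n - k) * (n.choose k : ℝ)) := by
    intro k _
    calc ‖((1 - θ) • (1 : Mc)) ^ k * (θ • P) ^ (n - k) * (n.choose k : Mc)‖
        ≤ ‖((1 - θ) • (1 : Mc)) ^ k * (θ • P) ^ (n - k)‖ * ‖(n.choose k : Mc)‖ := norm_mul_le _ _
      _ ≤ ‖((1 - θ) • (1 : Mc)) ^ k‖ * ‖(θ • P) ^ (n - k)‖ * ‖(n.choose k : Mc)‖ :=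
          mul_le_mul_of_nonneg_right (norm_mul_le _ _) (norm_nonneg _)
      _ ≤ ((1 - θ) ^ k) * (θ ^ (n - k) * (M * ρ ^ (n - k))) * (n.choose k : ℝ) := by
          have h1 : ‖((1 - θ) • (1 : Mc)) ^ k‖ = (1 - θ) ^ k := by
            rw [smul_pow, one_pow, norm_smul, norm_one, mul_one, Real.norm_eq_abs,
              abs_pow, abs_of_nonneg (by linarith)]
          have h2 : ‖(θ • P) ^ (n - k)‖ ≤ θ ^ (n - k) * (M * ρ ^ (n - k)) := by
            rw [smul_pow, norm_smul, Real.norm_eq_abs, abs_pow, abs_of_nonneg hθ0]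
            exact mul_le_mul_of_nonneg_left (h _) (pow_nonneg hθ0 _)
          have h3 : ‖(n.choose k : Mc)‖ ≤ (n.choose k : ℝ) := by
            simpa using Nat.norm_cast_le (α := Mc) (n.choose k)
          rw [h1]
          have hnn1 : (0:ℝ) ≤ (1 - θ) ^ k := pow_nonneg (by linarith) k
          apply mul_le_mul _ h3 (norm_nonneg _)
          · positivity
          · exact mul_le_mul_of_nonneg_left h2 hnn1
      _ = M * ((1 - θ) ^ k * (θ * ρ) ^ (n - k) * (n.choose k : ℝ)) := by
          rw [mul_pow]; ring
  refine (Finset.sum_le_sum hterm).trans ?_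
  rw [← Finset.mul_sum]
  apply mul_le_mul_of_nonneg_left _ hM
  rw [add_pow]

lemma key_scalar {μ : ℂ} {a r R : ℝ} (ha : 0 < a) (hre : μ.re ≤ -r) (hR : ‖μ‖ ≤ R)
    (h1 : a * R ^ 2 ≤ r / 2) (h2 : a * r ≤ 1 / 2) :
    ‖1 + (a : ℂ) * μ‖ ≤ 1 - 3 / 4 * (a * r) := by
  have habs : ∀ z : ℂ, ‖z‖ ^ 2 = z.re ^ 2 + z.im ^ 2 := fun z => by
    rw [Complex.sq_norm, Complex.normSq_apply]; ring
  have hnormsq : ‖1 + (a : ℂ) * μ‖ ^ 2 = 1 + 2 * a * μ.re + a ^ 2 * ‖μ‖ ^ 2 := by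
    rw [habs, habs]
    simp only [Complex.add_re, Complex.add_im, Complex.mul_re, Complex.mul_im,
      Complex.one_re, Complex.one_im, Complex.ofReal_re, Complex.ofReal_im]
    ring
  have hμnn : 0 ≤ ‖μ‖ := norm_nonneg μ
  have hRnn : 0 ≤ R := le_trans hμnn hR
  have hsq : ‖μ‖ ^ 2 ≤ R ^ 2 := by nlinarith
  have hA : a ^ 2 * ‖μ‖ ^ 2 ≤ a ^ 2 * R ^ 2 := mul_le_mul_of_nonneg_left hsq (sq_nonneg a)
  have hB : a * (a * R ^ 2) ≤ a * (r / 2) := mul_le_mul_of_nonneg_left h1 ha.le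
  have hC : 2 * a * μ.re ≤ 2 * a * (-r) := mul_le_mul_of_nonneg_left hre (by linarith)
  have hbound : ‖1 + (a : ℂ) * μ‖ ^ 2 ≤ (1 - 3 / 4 * (a * r)) ^ 2 := by
    rw [hnormsq]
    nlinarith [sq_nonneg (a * r)]
  have hrhs : (0:ℝ) ≤ 1 - 3 / 4 * (a * r) := by nlinarith
  calc ‖1 + (a : ℂ) * μ‖ = Real.sqrt (‖1 + (a : ℂ) * μ‖ ^ 2) := (Real.sqrt_sq (norm_nonneg _)).symm
    _ ≤ Real.sqrt ((1 - 3 / 4 * (a * r)) ^ 2) := Real.sqrt_le_sqrt hbound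
    _ = 1 - 3 / 4 * (a * r) := Real.sqrt_sq hrhs

set_option maxHeartbeats 1000000 in
lemma complex_key (hd : 0 < d) (B : Mc) (hB : ∀ μ ∈ spectrum ℂ B, μ.re < 0) :
    ∃ α₀ ε c : ℝ, 0 < α₀ ∧ 0 < ε ∧ 0 ≤ c ∧
      ∀ α ∈ Set.Ioc (0 : ℝ) α₀, ∀ n : ℕ,
        ‖(1 + α • B) ^ n - exp (((n : ℝ) * α) • B)‖ ≤
          α ^ 2 * n * c * Real.exp (-ε * α * n) := by
  haveI : Nonempty (Fin d) := ⟨⟨0, hd⟩⟩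
  -- max of real parts
  obtain ⟨μ₀, hμ₀mem, hμ₀max⟩ := (spectrum.isCompact B).exists_isMaxOn (spectrum.nonempty B)
    (Complex.continuous_re.continuousOn)
  set r : ℝ := -μ₀.re with hrdef
  have hrpos : 0 < r := by
    have := hB μ₀ hμ₀mem; simp only [hrdef]; linarith
  set R : ℝ := ‖B‖ + 1 with hRdef
  have hR1 : 1 ≤ R := by have := norm_nonneg B; simp only [hRdef]; linarith
  have hRpos : 0 < R := lt_of_lt_of_le one_pos hR1
  have hspecR : ∀ μ ∈ spectrum ℂ B, ‖μ‖ ≤ R := fun μ hμ => by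
    have := spectrum.norm_le_norm_of_mem hμ; simp only [hRdef]; linarith
  have hrR : r ≤ R := by
    have h1 : ‖μ₀‖ ≤ R := hspecR μ₀ hμ₀mem
    have h2 : |μ₀.re| ≤ ‖μ₀‖ := Complex.abs_re_le_norm μ₀
    have := neg_abs_le μ₀.re
    simp only [hrdef]; linarith
  set α₀ : ℝ := r / (2 * R ^ 2) with hα₀def
  have hα₀pos : 0 < α₀ := by positivity
  have hα₀R2 : α₀ * R ^ 2 ≤ r / 2 := by
    rw [hα₀def]; rw [div_mul_eq_mul_div, div_le_div_iff₀ (by positivity) (by norm_num)]; ring_nf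
    nlinarith
  have hα₀r : α₀ * r ≤ 1 / 2 := by
    have : α₀ ≤ 1 / (2 * R) := by
      rw [hα₀def, div_le_div_iff₀ (by positivity) (by positivity)]
      nlinarith
    have h2 : α₀ * r ≤ (1 / (2 * R)) * R :=
      mul_le_mul this hrR hrpos.le (by positivity)
    calc α₀ * r ≤ (1 / (2 * R)) * R := h2
      _ = 1 / 2 := by field_simp
  have hα₀R : α₀ * R ≤ 1 / 2 := by
    have : α₀ * R ^ 2 ≤ r / 2 := hα₀R2
    have hrR2 : r / 2 ≤ R / 2 := by linarith
    have hR2 : R ≤ R ^ 2 := by nlinarith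
    nlinarith
  set ρ : ℝ := 1 - α₀ * r / 2 with hρdef
  have hρ34 : 3 / 4 ≤ ρ := by simp only [hρdef]; linarith
  have hρlt1 : ρ < 1 := by simp only [hρdef]; nlinarith
  -- spectrum of P
  set P : Mc := 1 + α₀ • B with hPdef
  have haeval : (Polynomial.aeval B) (Polynomial.C 1 + Polynomial.C (α₀:ℂ) * Polynomial.X) = P := by
    simp only [map_add, map_mul, Polynomial.aeval_C, Polynomial.aeval_X, map_one, hPdef]
    have hsm : (α₀ : ℂ) • B = α₀ • B := by
      rw [← Complex.coe_algebraMap, algebraMap_smul]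
    rw [← Algebra.smul_def, hsm]
  have hspecmap := spectrum.map_polynomial_aeval_of_nonempty B
    (Polynomial.C 1 + Polynomial.C (α₀:ℂ) * Polynomial.X) (spectrum.nonempty B)
  rw [haeval] at hspecmap
  have hsr : spectralRadius ℂ P < ((Real.toNNReal ρ : NNReal) : ENNReal) := by
    apply spectrum.spectralRadius_lt_of_forall_lt
    intro z hz
    rw [hspecmap] at hz
    obtain ⟨μ, hμ, rfl⟩ := hz
    have hz1 : Polynomial.eval μ (Polynomial.C 1 + Polynomial.C (α₀:ℂ) * Polynomial.X)
        = 1 + (α₀:ℂ) * μ := by simp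
    show ‖Polynomial.eval μ (Polynomial.C 1 + Polynomial.C (α₀:ℂ) * Polynomial.X)‖₊ < ρ.toNNReal
    rw [hz1]
    have hkey := key_scalar hα₀pos (by have := hμ₀max hμ; simpa [hrdef] using this)
      (hspecR μ hμ) hα₀R2 hα₀r
    have hlt : ‖1 + (α₀:ℂ) * μ‖ < ρ := by
      refine lt_of_le_of_lt hkey ?_
      simp only [hρdef]
      nlinarith [mul_pos hα₀pos hrpos]
    rw [← norm_toNNReal]
    exact_mod_cast (Real.toNNReal_lt_toNNReal_iff_of_nonneg (norm_nonneg _)).mpr hlt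
  obtain ⟨M, hM1, hMpow⟩ := exists_pow_le P hsr
  have hcoe : ((Real.toNNReal ρ : NNReal) : ℝ) = ρ := Real.coe_toNNReal ρ (le_trans (by norm_num) hρ34)
  rw [hcoe] at hMpow
  have hM0 : 0 ≤ M := le_trans zero_le_one hM1
  -- constants
  set ε : ℝ := r / 2 with hεdef
  have hεpos : 0 < ε := by positivity
  set c₁ : ℝ := R ^ 2 * Real.exp 1 with hc₁def
  have hc₁pos : 0 < c₁ := by positivity
  set c : ℝ := M ^ 2 * c₁ * Real.exp 1 with hcdef
  have hcpos : 0 < c := by positivity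
  clear_value r R α₀ ρ ε c₁ c
  refine ⟨α₀, ε, c, hα₀pos, hεpos, hcpos.le, ?_⟩
  rintro α ⟨hα0, hαle⟩ n
  rcases Nat.eq_zero_or_pos n with rfl | hn
  · simp [NormedSpace.exp_zero]
  have hα₀ne : α₀ ≠ 0 := hα₀pos.ne'
  set θ : ℝ := α / α₀ with hθdef
  have hθ0 : 0 < θ := div_pos hα0 hα₀pos
  have hθ1 : θ ≤ 1 := (div_le_one hα₀pos).mpr hαle
  have hθα : θ * α₀ = α := div_mul_cancel₀ α hα₀ne
  clear_value θ
  have hconv : (1 - θ) • (1 : Mc) + θ • P = 1 + α • B := by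
    rw [hPdef, smul_add, smul_smul, hθα, ← add_assoc, ← add_smul, sub_add_cancel, one_smul]
  have hσα : 1 - θ + θ * ρ = 1 - ε * α := by
    rw [hρdef, hεdef]
    linear_combination (-(r / 2)) * hθα
  have hρ0 : (0:ℝ) ≤ ρ := by linarith
  have hεα : ε * α ≤ 1 / 4 := by
    have h1 : ε * α ≤ ε * α₀ := mul_le_mul_of_nonneg_left hαle hεpos.le
    have h2 : ε * α₀ = α₀ * r / 2 := by rw [hεdef]; ring
    linarith
  have honem : (0:ℝ) ≤ 1 - ε * α := by linarith
  set E : ℝ := Real.exp (-(ε * α)) with hEdef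
  have hE0 : (0:ℝ) ≤ E := (Real.exp_pos _).le
  have hexpb : 1 - ε * α ≤ E := by
    have := Real.add_one_le_exp (-(ε * α)); rw [hEdef]; linarith
  -- powers of the Euler matrix
  have hpow : ∀ k : ℕ, ‖(1 + α • B) ^ k‖ ≤ M * E ^ k := by
    intro k
    rw [← hconv]
    have h1 := norm_convex_pow P hM0 hρ0 hMpow hθ0.le hθ1 k
    rw [hσα] at h1
    exact h1.trans (mul_le_mul_of_nonneg_left (pow_le_pow_left₀ honem hexpb k) hM0)
  -- powers of the exponential
  have hQ : ∀ k : ℕ, ‖exp (((k : ℝ) * α) • B)‖ ≤ M * Real.exp (-(ε * α * k)) := by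
    intro k
    have hu : (0:ℝ) ≤ (k : ℝ) * α / α₀ := by positivity
    have hP1 : P - 1 = α₀ • B := by rw [hPdef]; abel
    have hid : ((k : ℝ) * α / α₀) • (P - 1) = ((k : ℝ) * α) • B := by
      rw [hP1, smul_smul, div_mul_cancel₀ _ hα₀ne]
    have h1 := norm_exp_smul_le P hM1 hMpow hu
    rw [hid] at h1
    have h2 : (k : ℝ) * α / α₀ * ρ - (k : ℝ) * α / α₀ = -(ε * α * k) := by
      rw [hρdef, hεdef]
      field_simp
      ring
    rwa [h2] at h1
  have hQpow : ∀ k : ℕ, ‖(exp (α • B)) ^ k‖ ≤ M * E ^ k := by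
    intro k
    have h1 : (exp (α • B)) ^ k = exp (((k : ℝ) * α) • B) := by
      rw [← Matrix.exp_nsmul k (α • B), ← Nat.cast_smul_eq_nsmul ℝ, smul_smul]
    rw [h1]
    have h2 : E ^ k = Real.exp (-(ε * α * k)) := by
      rw [hEdef, ← Real.exp_nat_mul]
      congr 1
      ring
    rw [h2]
    exact hQ k
  -- difference bound
  have hnormαB : ‖α • B‖ ≤ α * R := by
    rw [norm_smul, Real.norm_eq_abs, abs_of_pos hα0]
    have : ‖B‖ ≤ R := by rw [hRdef]; linarith
    exact mul_le_mul_of_nonneg_left this hα0.le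
  have hαR1 : α * R ≤ 1 := by
    have : α * R ≤ α₀ * R := mul_le_mul_of_nonneg_right hαle hRpos.le
    linarith
  have hdiff : ‖(1 + α • B) - exp (α • B)‖ ≤ c₁ * α ^ 2 := by
    have hneg : (1 + α • B) - exp (α • B) = -(exp (α • B) - 1 - α • B) := by abel
    rw [hneg, norm_neg]
    have h1 := norm_exp_remainder (α • B) (hnormαB.trans hαR1)
    have h2 : ‖α • B‖ ^ 2 ≤ (α * R) ^ 2 := by
      apply pow_le_pow_left₀ (norm_nonneg _) hnormαB
    calc ‖exp (α • B) - 1 - α • B‖ ≤ ‖α • B‖ ^ 2 * Real.exp 1 := h1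
      _ ≤ (α * R) ^ 2 * Real.exp 1 := mul_le_mul_of_nonneg_right h2 (Real.exp_pos _).le
      _ = c₁ * α ^ 2 := by rw [hc₁def]; ring
  -- telescoping
  set X : Mc := 1 + α • B with hXdef
  set Q : Mc := exp (α • B) with hQdef
  have hcommPQ : Commute X Q := by
    have h1 : Commute X (α • B) := ((Commute.one_left (α • B)).add_left (Commute.refl _))
    exact h1.exp_right
  have hgeom := hcommPQ.geom_sum₂_mul n
  have hexpn : exp (((n : ℝ) * α) • B) = Q ^ n := by
    rw [hQdef, ← Matrix.exp_nsmul n (α • B), ← Nat.cast_smul_eq_nsmul ℝ, smul_smul]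
  rw [hexpn, ← hgeom]
  have hsumbound : ‖∑ i ∈ Finset.range n, X ^ i * Q ^ (n - 1 - i)‖ ≤ n * (M ^ 2 * E ^ (n - 1)) := by
    refine (norm_sum_le _ _).trans ?_
    have hterm : ∀ i ∈ Finset.range n, ‖X ^ i * Q ^ (n - 1 - i)‖ ≤ M ^ 2 * E ^ (n - 1) := by
      intro i hi
      have hin : i ≤ n - 1 := Nat.le_pred_of_lt (Finset.mem_range.mp hi)
      calc ‖X ^ i * Q ^ (n - 1 - i)‖ ≤ ‖X ^ i‖ * ‖Q ^ (n - 1 - i)‖ := norm_mul_le _ _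
        _ ≤ (M * E ^ i) * (M * E ^ (n - 1 - i)) := by
            apply mul_le_mul (hpow i) (hQpow _) (norm_nonneg _) (by positivity)
        _ = M ^ 2 * (E ^ i * E ^ (n - 1 - i)) := by ring
        _ = M ^ 2 * E ^ (n - 1) := by rw [← pow_add, Nat.add_sub_cancel' hin]
    calc (∑ i ∈ Finset.range n, ‖X ^ i * Q ^ (n - 1 - i)‖)
        ≤ ∑ _i ∈ Finset.range n, M ^ 2 * E ^ (n - 1) := Finset.sum_le_sum hterm
      _ = n * (M ^ 2 * E ^ (n - 1)) := by rw [Finset.sum_const, Finset.card_range]; ring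
  have hEn1 : E ^ (n - 1) ≤ Real.exp 1 * Real.exp (-(ε * α * n)) := by
    rw [hEdef, ← Real.exp_nat_mul, ← Real.exp_add]
    apply Real.exp_le_exp.mpr
    have hcast : ((n - 1 : ℕ) : ℝ) = (n : ℝ) - 1 := by
      rw [Nat.cast_sub hn]; norm_num
    rw [hcast]
    nlinarith
  calc ‖(∑ i ∈ Finset.range n, X ^ i * Q ^ (n - 1 - i)) * (X - Q)‖
      ≤ ‖∑ i ∈ Finset.range n, X ^ i * Q ^ (n - 1 - i)‖ * ‖X - Q‖ := norm_mul_le _ _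
    _ ≤ (n * (M ^ 2 * E ^ (n - 1))) * (c₁ * α ^ 2) := by
        apply mul_le_mul hsumbound hdiff (norm_nonneg _) (by positivity)
    _ ≤ (n * (M ^ 2 * (Real.exp 1 * Real.exp (-(ε * α * n))))) * (c₁ * α ^ 2) := by
        apply mul_le_mul_of_nonneg_right _ (by positivity)
        apply mul_le_mul_of_nonneg_left _ (Nat.cast_nonneg n)
        exact mul_le_mul_of_nonneg_left hEn1 (by positivity)
    _ = α ^ 2 * n * c * Real.exp (-ε * α * n) := by
        rw [hcdef]
        ring_nf

lemma real_key (hd : 0 < d) (A : Matrix (Fin d) (Fin d) ℝ) (hA : IsHurwitz A) :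
    ∃ α₀ ε c : ℝ, 0 < α₀ ∧ 0 < ε ∧ 0 ≤ c ∧
      ∀ α ∈ Set.Ioc (0 : ℝ) α₀, ∀ n : ℕ,
        frobNorm ((1 + α • A) ^ n - exp (((n : ℝ) * α) • A)) ≤
          α ^ 2 * n * c * Real.exp (-ε * α * n) := by
  set Φ : Matrix (Fin d) (Fin d) ℝ →ₐ[ℝ] Mc := (Algebra.ofId ℝ ℂ).mapMatrix with hΦdef
  have hΦapply : ∀ M : Matrix (Fin d) (Fin d) ℝ, Φ M = M.map (algebraMap ℝ ℂ) := fun M => rfl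
  have hΦcont : Continuous Φ := by
    show Continuous fun M : Matrix (Fin d) (Fin d) ℝ => Φ M
    simp only [hΦapply]
    exact continuous_id.matrix_map (continuous_algebraMap ℝ ℂ)
  set B : Mc := A.map (algebraMap ℝ ℂ) with hBdef
  obtain ⟨α₀, ε, c, hα₀, hε, hc, hbound⟩ := complex_key hd B hA
  refine ⟨α₀, ε, (d : ℝ) ^ 2 * c, hα₀, hε, by positivity, ?_⟩
  rintro α hα n
  set X : Matrix (Fin d) (Fin d) ℝ := (1 + α • A) ^ n - exp (((n : ℝ) * α) • A) with hXdef
  have hmapX : Φ X = (1 + α • B) ^ n - exp (((n : ℝ) * α) • B) := by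
    rw [hXdef, map_sub, map_pow, map_add, map_one, map_smul]
    erw [map_exp Φ hΦcont]
    rw [map_smul]
    rfl
  have hentry : ∀ i j, |X i j| ≤ ‖Φ X‖ := by
    intro i j
    have h1 : (Φ X) i j = ((X i j : ℝ) : ℂ) := rfl
    have h2 : ‖(Φ X) i j‖ ≤ ‖Φ X‖ := norm_entry_le _ i j
    rw [h1] at h2
    rwa [Complex.norm_real, Real.norm_eq_abs] at h2
  have hfrob : frobNorm X ≤ (d : ℝ) ^ 2 * ‖Φ X‖ := by
    refine (frobNorm_le_sum X).trans ?_
    calc (∑ i, ∑ j, |X i j|) ≤ ∑ _i : Fin d, ∑ _j : Fin d, ‖Φ X‖ := by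
          refine Finset.sum_le_sum fun i _ => Finset.sum_le_sum fun j _ => hentry i j
      _ = (d : ℝ) ^ 2 * ‖Φ X‖ := by
          simp [Finset.sum_const, Finset.card_univ]
          ring
  have hkey := hbound α hα n
  rw [← hmapX] at hkey
  calc frobNorm X ≤ (d : ℝ) ^ 2 * ‖Φ X‖ := hfrob
    _ ≤ (d : ℝ) ^ 2 * (α ^ 2 * n * c * Real.exp (-ε * α * n)) := by
        exact mul_le_mul_of_nonneg_left hkey (by positivity)
    _ = α ^ 2 * n * ((d : ℝ) ^ 2 * c) * Real.exp (-ε * α * n) := by ring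

end

end EulerExpAux

/-- If `A` is Hurwitz then there exist `α₀ > 0`, `C < ∞`, `ε > 0` such that for all
`α ∈ (0, α₀]` and `n ≥ 0`,
`‖(I + α A)^n - e^{n α A}‖_F ≤ α² n C e^{-ε α n} ≤ (C/ε) α`. -/
theorem euler_vs_exp_hurwitz_bound {d : ℕ} (A : Matrix (Fin d) (Fin d) ℝ)
    (hA : IsHurwitz A) :
    ∃ α₀ C ε : ℝ, 0 < α₀ ∧ 0 < ε ∧
      ∀ α : ℝ, α ∈ Set.Ioc 0 α₀ → ∀ n : ℕ,
        frobNorm ((1 + α • A) ^ n - NormedSpace.exp ((n * α) • A)) ≤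
            α ^ 2 * n * C * Real.exp (-ε * α * n) ∧
          α ^ 2 * n * C * Real.exp (-ε * α * n) ≤ (C / ε) * α := by
  have hsecond : ∀ C ε α : ℝ, 0 ≤ C → 0 < ε → 0 < α → ∀ n : ℕ,
      α ^ 2 * n * C * Real.exp (-ε * α * n) ≤ (C / ε) * α := by
    intro C ε α hC hε hα n
    have ht0 : (0:ℝ) ≤ ε * α * n := by positivity
    have h1 : ε * α * n ≤ Real.exp (ε * α * n) := by
      have := Real.add_one_le_exp (ε * α * (n:ℝ)); linarith
    have h2 : (ε * α * n) * Real.exp (-(ε * α * n)) ≤ 1 := by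
      have h3 := mul_le_mul_of_nonneg_right h1 (Real.exp_pos (-(ε * α * (n:ℝ)))).le
      rwa [← Real.exp_add, add_neg_cancel, Real.exp_zero] at h3
    have hrw : α ^ 2 * n * C * Real.exp (-ε * α * n) =
        (C / ε) * α * ((ε * α * n) * Real.exp (-(ε * α * n))) := by
      rw [show -ε * α * (n:ℝ) = -(ε * α * n) by ring]
      field_simp
    rw [hrw]
    calc (C / ε) * α * ((ε * α * n) * Real.exp (-(ε * α * n))) ≤ (C / ε) * α * 1 := by
          apply mul_le_mul_of_nonneg_left h2 (by positivity)
      _ = (C / ε) * α := mul_one _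
  rcases Nat.eq_zero_or_pos d with rfl | hd
  · refine ⟨1, 0, 1, one_pos, one_pos, fun α hα n => ?_⟩
    constructor
    · have : frobNorm ((1 + α • A) ^ n - NormedSpace.exp ((n * α) • A)) = 0 := by
        simp [frobNorm]
      simp [this]
    · simp
  · obtain ⟨α₀, ε, c, hα₀, hε, hc, hbound⟩ := EulerExpAux.real_key hd A hA
    refine ⟨α₀, c, ε, hα₀, hε, fun α hα n => ?_⟩
    exact ⟨hbound α hα n, hsecond c ε α hc hε hα.1 n⟩
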